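/- Let d ≥ 3 and n ≥ 0 an integer. Then Σ_{x ∈ ℤ^d, x₁ = n} (1 + min(n, |x|)) / (1 + |x|^d) ≤ C(d), with C(d) independent of n, where |·| is the ℓ^∞ norm on ℤ^d. -/

import Mathlib

open Finset NNReal

namespace Stmt12

variable {d : ℕ}

/-- sup norm of an integer vector, as a natural number -/
def NN (x : Fin d → ℤ) : ℕ := Finset.univ.sup fun j => (x j).natAbs

lemma natAbs_le_NN (x : Fin d → ℤ) (j : Fin d) : (x j).natAbs ≤ NN x :=
  Finset.le_sup (f := fun j => (x j).natAbs) (mem_univ j)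

lemma norm_eq_NN (x : Fin d → ℤ) : ‖x‖ = (NN x : ℝ) := by
  have h1 : ‖x‖₊ = ((NN x : ℕ) : ℝ≥0) := by
    rw [Pi.nnnorm_def, NN,
      Finset.comp_sup_eq_sup_comp (Nat.cast : ℕ → ℝ≥0)
        (fun a b => by simp [Nat.cast_max]) (by simp)]
    congr 1
    funext j
    exact (NNReal.natCast_natAbs _).symm
  rw [← coe_nnnorm, h1]
  simp

lemma mem_Icc_of_natAbs_le {t : ℤ} {a : ℕ} (h : t.natAbs ≤ a) :
    t ∈ Finset.Icc (-(a:ℤ)) (a:ℤ) := by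
  rw [Finset.mem_Icc]
  omega


lemma prod_ite_one_card (e : Fin d) (c : ℕ) :
    ∏ j : Fin d, (if j = e then 1 else c) = c ^ (d - 1) := by
  rw [← Finset.mul_prod_erase _ _ (mem_univ e), if_pos rfl, one_mul,
    Finset.prod_congr rfl (fun j hj => if_neg (Finset.ne_of_mem_erase hj)),
    Finset.prod_const, Finset.card_erase_of_mem (mem_univ e), Finset.card_univ,
    Fintype.card_fin]

lemma card_box1 (e : Fin d) (n : ℕ) :
    (Fintype.piFinset fun j =>
      if j = e then ({(n:ℤ)} : Finset ℤ) else Finset.Icc (-(n:ℤ)) (n:ℤ)).card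
      = (2*n+1) ^ (d - 1) := by
  rw [Fintype.card_piFinset]
  rw [show (fun j => (if j = e then ({(n:ℤ)} : Finset ℤ) else Finset.Icc (-(n:ℤ)) (n:ℤ)).card)
      = fun j => if j = e then 1 else 2*n+1 by
    funext j
    split
    · simp
    · rw [Int.card_Icc]; omega]
  exact prod_ite_one_card e _

lemma card_box2 (e i : Fin d) (hie : i ≠ e) (n : ℕ) (t : ℤ) :
    (Fintype.piFinset fun j =>
      if j = e then ({(n:ℤ)} : Finset ℤ) else if j = i then ({t} : Finset ℤ)
        else Finset.Icc (-(t.natAbs:ℤ)) (t.natAbs:ℤ)).card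
      = (2*t.natAbs+1) ^ (d - 2) := by
  rw [Fintype.card_piFinset]
  rw [show (fun j => (if j = e then ({(n:ℤ)} : Finset ℤ) else if j = i then ({t} : Finset ℤ)
        else Finset.Icc (-(t.natAbs:ℤ)) (t.natAbs:ℤ)).card)
      = fun j => if j = e then 1 else if j = i then 1 else 2*t.natAbs+1 by
    funext j
    split
    · simp
    · split
      · simp
      · rw [Int.card_Icc]; omega]
  rw [← Finset.mul_prod_erase _ _ (mem_univ e), if_pos rfl, one_mul]
  have hi : i ∈ univ.erase e := Finset.mem_erase.mpr ⟨hie, mem_univ i⟩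
  rw [← Finset.mul_prod_erase _ _ hi, if_neg hie, if_pos rfl, one_mul,
    Finset.prod_congr rfl (fun j hj => ?_), Finset.prod_const,
    Finset.card_erase_of_mem hi, Finset.card_erase_of_mem (mem_univ e),
    Finset.card_univ, Fintype.card_fin]
  · rfl
  · have hj1 := Finset.ne_of_mem_erase hj
    have hj2 := Finset.ne_of_mem_erase (Finset.mem_of_mem_erase hj)
    rw [if_neg hj2, if_neg hj1]

lemma pow_plus (k a : ℕ) : (1+a)^k ≤ 2^k * (1+a^k) := by
  rcases Nat.eq_zero_or_pos a with rfl | ha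
  · have h2 : 1 ≤ 2^k := Nat.one_le_two_pow
    norm_num
    nlinarith [Nat.zero_le (0^k)]
  · calc (1+a)^k ≤ (2*a)^k := Nat.pow_le_pow_left (by omega) _
      _ = 2^k * a^k := mul_pow 2 a k
      _ ≤ 2^k * (1+a^k) := Nat.mul_le_mul_left _ (by omega)

lemma auxA (hd : 1 ≤ d) (a : ℕ) : (2*a+1)^(d-1) * (1+a) ≤ 4^d * (1+a^d) := by
  calc (2*a+1)^(d-1) * (1+a)
      ≤ (2*(1+a))^(d-1) * (1+a) :=
        Nat.mul_le_mul_right _ (Nat.pow_le_pow_left (by omega) _)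
    _ = 2^(d-1) * ((1+a)^(d-1) * (1+a)^1) := by rw [mul_pow]; ring
    _ = 2^(d-1) * (1+a)^d := by rw [← pow_add]; congr 2; omega
    _ ≤ 2^d * (2^d * (1+a^d)) :=
        Nat.mul_le_mul (Nat.pow_le_pow_right (by omega) (by omega)) (pow_plus d a)
    _ = 4^d * (1+a^d) := by rw [← mul_assoc, ← mul_pow]; norm_num

lemma auxB (hd : 2 ≤ d) (a : ℕ) : (2*a+1)^(d-2) * (1+a)^2 ≤ 4^d * (1+a^d) := by
  calc (2*a+1)^(d-2) * (1+a)^2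
      ≤ (2*(1+a))^(d-2) * (1+a)^2 :=
        Nat.mul_le_mul_right _ (Nat.pow_le_pow_left (by omega) _)
    _ = 2^(d-2) * ((1+a)^(d-2) * (1+a)^2) := by rw [mul_pow]; ring
    _ = 2^(d-2) * (1+a)^d := by rw [← pow_add]; congr 2; omega
    _ ≤ 2^d * (2^d * (1+a^d)) :=
        Nat.mul_le_mul (Nat.pow_le_pow_right (by omega) (by omega)) (pow_plus d a)
    _ = 4^d * (1+a^d) := by rw [← mul_assoc, ← mul_pow]; norm_num

lemma inv_sq_le_tele (b : ℝ) (hb : 0 ≤ b) :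
    1/(1+b)^2 ≤ 2/(1+b) - 2/(2+b) := by
  have h1 : (0:ℝ) < 1+b := by linarith
  have h2 : (0:ℝ) < 2+b := by linarith
  rw [div_sub_div _ _ h1.ne' h2.ne', div_le_div_iff₀ (by positivity) (by positivity)]
  nlinarith

lemma sum_inv_sq_le (n M : ℕ) :
    ∑ a ∈ Finset.Icc n M, (1:ℝ)/(1+(a:ℝ))^2 ≤ 2/(1+(n:ℝ)) := by
  rw [← Finset.Ico_add_one_right_eq_Icc, Finset.sum_Ico_eq_sum_range]
  calc ∑ i ∈ Finset.range (M+1-n), (1:ℝ)/(1+((n+i : ℕ):ℝ))^2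
      ≤ ∑ i ∈ Finset.range (M+1-n),
          ((fun i => 2/(1+((n+i : ℕ):ℝ))) i - (fun i => 2/(1+((n+i : ℕ):ℝ))) (i+1)) := by
        refine Finset.sum_le_sum fun i _ => ?_
        have := inv_sq_le_tele ((n+i : ℕ):ℝ) (by positivity)
        simp only []
        convert this using 2
        · rfl
        push_cast
        ring
    _ = 2/(1+((n+0 : ℕ):ℝ)) - 2/(1+((n+(M+1-n) : ℕ):ℝ)) := Finset.sum_range_sub' _ _
    _ ≤ 2/(1+(n:ℝ)) := by
        simp only [Nat.add_zero]
        have : (0:ℝ) ≤ 2/(1+((n+(M+1-n) : ℕ):ℝ)) := by positivity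
        linarith


lemma sum_over_int (n : ℕ) (U : Finset ℤ) (h : ∀ t ∈ U, n ≤ t.natAbs) :
    ∑ t ∈ U, (1:ℝ)/(1+(t.natAbs:ℝ))^2 ≤ 4/(1+(n:ℝ)) := by
  rw [← Finset.sum_fiberwise_of_maps_to
    (fun t ht => Finset.mem_image_of_mem Int.natAbs ht)
    (fun t => (1:ℝ)/(1+(t.natAbs:ℝ))^2)]
  have step1 : ∀ a ∈ U.image Int.natAbs,
      ∑ t ∈ U.filter (fun t => t.natAbs = a), (1:ℝ)/(1+(t.natAbs:ℝ))^2
        ≤ 2 * ((1:ℝ)/(1+(a:ℝ))^2) := by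
    intro a _
    have hcard : (U.filter (fun t => t.natAbs = a)).card ≤ 2 := by
      have hsub : U.filter (fun t => t.natAbs = a) ⊆ {(a:ℤ), -(a:ℤ)} := by
        intro t ht
        have := (Finset.mem_filter.mp ht).2
        rcases Int.natAbs_eq_iff.mp this with h' | h' <;> simp [h']
      refine le_trans (Finset.card_le_card hsub) ?_
      exact le_trans (Finset.card_insert_le _ _) (by simp)
    calc ∑ t ∈ U.filter (fun t => t.natAbs = a), (1:ℝ)/(1+(t.natAbs:ℝ))^2
        = ∑ _t ∈ U.filter (fun t => t.natAbs = a), (1:ℝ)/(1+(a:ℝ))^2 := by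
          refine Finset.sum_congr rfl fun t ht => ?_
          rw [(Finset.mem_filter.mp ht).2]
      _ = ((U.filter (fun t => t.natAbs = a)).card : ℝ) * ((1:ℝ)/(1+(a:ℝ))^2) := by
          rw [Finset.sum_const, nsmul_eq_mul]
      _ ≤ 2 * ((1:ℝ)/(1+(a:ℝ))^2) := by
          have : (0:ℝ) ≤ (1:ℝ)/(1+(a:ℝ))^2 := by positivity
          have h2 : ((U.filter (fun t => t.natAbs = a)).card : ℝ) ≤ 2 := by
            exact_mod_cast hcard
          nlinarith
  calc ∑ a ∈ U.image Int.natAbs, ∑ t ∈ U.filter (fun t => t.natAbs = a),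
          (1:ℝ)/(1+(t.natAbs:ℝ))^2
      ≤ ∑ a ∈ U.image Int.natAbs, 2 * ((1:ℝ)/(1+(a:ℝ))^2) := Finset.sum_le_sum step1
    _ = 2 * ∑ a ∈ U.image Int.natAbs, (1:ℝ)/(1+(a:ℝ))^2 := by rw [Finset.mul_sum]
    _ ≤ 2 * ∑ a ∈ Finset.Icc n ((U.image Int.natAbs).sup id), (1:ℝ)/(1+(a:ℝ))^2 := by
        have hsub : U.image Int.natAbs ⊆ Finset.Icc n ((U.image Int.natAbs).sup id) := by
          intro a ha
          rw [Finset.mem_Icc]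
          obtain ⟨t, ht, rfl⟩ := Finset.mem_image.mp ha
          exact ⟨h t ht, Finset.le_sup (f := id) ha⟩
        refine mul_le_mul_of_nonneg_left ?_ (by norm_num)
        exact Finset.sum_le_sum_of_subset_of_nonneg hsub (fun a _ _ => by positivity)
    _ ≤ 2 * (2/(1+(n:ℝ))) := by
        have := sum_inv_sq_le n ((U.image Int.natAbs).sup id)
        linarith
    _ = 4/(1+(n:ℝ)) := by ring


lemma numericA (hd : 1 ≤ d) (a : ℕ) :
    (((2*a+1)^(d-1) : ℕ):ℝ) * ((1+(a:ℝ))/(1+(a:ℝ)^d)) ≤ 4^d := by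
  have h := auxA hd a
  have h' : (((2*a+1)^(d-1)*(1+a) : ℕ):ℝ) ≤ ((4^d*(1+a^d) : ℕ):ℝ) := Nat.cast_le.mpr h
  push_cast at h'
  rw [mul_div_assoc', div_le_iff₀ (by positivity)]
  push_cast
  nlinarith [h']

lemma numericB (hd : 2 ≤ d) (a : ℕ) (c : ℝ) (hc : 0 ≤ c) :
    (((2*a+1)^(d-2) : ℕ):ℝ) * (c/(1+(a:ℝ)^d)) ≤ 4^d * c * (1/(1+(a:ℝ))^2) := by
  have h := auxB hd a
  have h' : (((2*a+1)^(d-2)*(1+a)^2 : ℕ):ℝ) ≤ ((4^d*(1+a^d) : ℕ):ℝ) := Nat.cast_le.mpr h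
  push_cast at h'
  have h1 : (0:ℝ) < 1+(a:ℝ)^d := by positivity
  have h2 : (0:ℝ) < (1+(a:ℝ))^2 := by positivity
  have hkey : (((2*a+1)^(d-2) : ℕ):ℝ)/(1+(a:ℝ)^d) ≤ 4^d/(1+(a:ℝ))^2 := by
    rw [div_le_div_iff₀ h1 h2]
    push_cast
    nlinarith [h']
  calc (((2*a+1)^(d-2) : ℕ):ℝ) * (c/(1+(a:ℝ)^d))
      = (((2*a+1)^(d-2) : ℕ):ℝ)/(1+(a:ℝ)^d) * c := by ring
    _ ≤ 4^d/(1+(a:ℝ))^2 * c := mul_le_mul_of_nonneg_right hkey hc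
    _ = 4^d * c * (1/(1+(a:ℝ))^2) := by ring

lemma key (hd : 3 ≤ d) (e : Fin d) (n : ℕ) (s : Finset (Fin d → ℤ)) :
    ∑ x ∈ s, (if x e = (n:ℤ) then (1 + min ((n:ℝ)) ‖x‖)/(1+‖x‖^d) else 0)
      ≤ (d:ℝ) * 4^(d+1) := by
  rw [← Finset.sum_filter]
  set s' := s.filter (fun x => x e = (n:ℤ)) with hs'def
  have hx_e : ∀ x ∈ s', x e = (n:ℤ) := fun x hx => (Finset.mem_filter.mp hx).2
  have h_nle : ∀ x ∈ s', n ≤ NN x := by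
    intro x hx
    have h1 := natAbs_le_NN x e
    rwa [hx_e x hx, Int.natAbs_natCast] at h1
  have hterm : ∀ x ∈ s', (1 + min ((n:ℝ)) ‖x‖)/(1+‖x‖^d)
      = (1+(n:ℝ))/(1+((NN x : ℕ):ℝ)^d) := by
    intro x hx
    rw [norm_eq_NN, min_eq_left (by exact_mod_cast h_nle x hx)]
  rw [Finset.sum_congr rfl hterm]
  have hJ : ∀ x : Fin d → ℤ, ∃ i : Fin d, NN x = (x i).natAbs := by
    intro x
    obtain ⟨i, _, hi⟩ := Finset.exists_mem_eq_sup univ ⟨e, mem_univ e⟩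
      (fun j => (x j).natAbs)
    exact ⟨i, hi⟩
  choose J hJspec using hJ
  rw [← Finset.sum_fiberwise_of_maps_to (fun x _ => Finset.mem_univ (J x))
    (fun x => (1+(n:ℝ))/(1+((NN x : ℕ):ℝ)^d))]
  have hfib : ∀ i : Fin d,
      ∑ x ∈ s'.filter (fun x => J x = i), (1+(n:ℝ))/(1+((NN x : ℕ):ℝ)^d)
        ≤ (4:ℝ)^(d+1) := by
    intro i
    by_cases hie : i = e
    · subst hie
      have hNN : ∀ x ∈ s'.filter (fun x => J x = i), NN x = n := by
        intro x hx
        obtain ⟨hx1, hx2⟩ := Finset.mem_filter.mp hx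
        have h3 := hJspec x
        rwa [hx2, hx_e x hx1, Int.natAbs_natCast] at h3
      have hsub : s'.filter (fun x => J x = i) ⊆ Fintype.piFinset fun j =>
          if j = i then ({(n:ℤ)} : Finset ℤ) else Finset.Icc (-(n:ℤ)) (n:ℤ) := by
        intro x hx
        rw [Fintype.mem_piFinset]
        intro j
        by_cases hj : j = i
        · subst hj; rw [if_pos rfl, Finset.mem_singleton]
          exact hx_e x (Finset.mem_filter.mp hx).1
        · rw [if_neg hj]
          refine mem_Icc_of_natAbs_le ?_
          rw [← hNN x hx]
          exact natAbs_le_NN x j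
      calc ∑ x ∈ s'.filter (fun x => J x = i), (1+(n:ℝ))/(1+((NN x : ℕ):ℝ)^d)
          = ∑ _x ∈ s'.filter (fun x => J x = i), (1+(n:ℝ))/(1+((n:ℕ):ℝ)^d) :=
            Finset.sum_congr rfl fun x hx => by rw [hNN x hx]
        _ = ((s'.filter (fun x => J x = i)).card : ℝ) * ((1+(n:ℝ))/(1+((n:ℕ):ℝ)^d)) := by
            rw [Finset.sum_const, nsmul_eq_mul]
        _ ≤ (((2*n+1)^(d-1) : ℕ) : ℝ) * ((1+(n:ℝ))/(1+((n:ℕ):ℝ)^d)) := by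
            refine mul_le_mul_of_nonneg_right ?_ (by positivity)
            exact_mod_cast (Finset.card_le_card hsub).trans_eq (card_box1 i n)
        _ ≤ 4^d := numericA (by omega) n
        _ ≤ 4^(d+1) := by
            refine pow_le_pow_right₀ (by norm_num) (by omega)
    · rw [← Finset.sum_fiberwise_of_maps_to
        (fun x hx => Finset.mem_image_of_mem (fun y => y i) hx)
        (fun x => (1+(n:ℝ))/(1+((NN x : ℕ):ℝ)^d))]
      set T := s'.filter (fun x => J x = i) with hTdef
      have hNNx : ∀ x ∈ T, NN x = (x i).natAbs := by
        intro x hx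
        rw [hJspec x, (Finset.mem_filter.mp hx).2]
      have himg : ∀ t ∈ T.image (fun y => y i), n ≤ t.natAbs := by
        intro t ht
        obtain ⟨x, hx, rfl⟩ := Finset.mem_image.mp ht
        rw [← hNNx x hx]
        exact h_nle x (Finset.mem_filter.mp hx).1
      have hinner : ∀ t ∈ T.image (fun y => y i),
          ∑ x ∈ T.filter (fun x => x i = t), (1+(n:ℝ))/(1+((NN x : ℕ):ℝ)^d)
            ≤ (4:ℝ)^d * (1+(n:ℝ)) * (1/(1+(t.natAbs:ℝ))^2) := by
        intro t _
        have hNNt : ∀ x ∈ T.filter (fun x => x i = t), NN x = t.natAbs := by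
          intro x hx
          rw [hNNx x (Finset.mem_filter.mp hx).1, (Finset.mem_filter.mp hx).2]
        have hsub2 : T.filter (fun x => x i = t) ⊆ Fintype.piFinset fun j =>
            if j = e then ({(n:ℤ)} : Finset ℤ) else if j = i then ({t} : Finset ℤ)
              else Finset.Icc (-(t.natAbs:ℤ)) (t.natAbs:ℤ) := by
          intro x hx
          have hx1 : x ∈ T := (Finset.mem_filter.mp hx).1
          have hx2 : x i = t := (Finset.mem_filter.mp hx).2
          rw [Fintype.mem_piFinset]
          intro j
          by_cases hj : j = e
          · subst hj; rw [if_pos rfl, Finset.mem_singleton]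
            exact hx_e x (Finset.mem_filter.mp hx1).1
          · rw [if_neg hj]
            by_cases hj2 : j = i
            · subst hj2; rw [if_pos rfl, Finset.mem_singleton]; exact hx2
            · rw [if_neg hj2]
              refine mem_Icc_of_natAbs_le ?_
              rw [← hNNt x hx]
              exact natAbs_le_NN x j
        calc ∑ x ∈ T.filter (fun x => x i = t), (1+(n:ℝ))/(1+((NN x : ℕ):ℝ)^d)
            = ∑ _x ∈ T.filter (fun x => x i = t), (1+(n:ℝ))/(1+((t.natAbs:ℕ):ℝ)^d) :=
              Finset.sum_congr rfl fun x hx => by rw [hNNt x hx]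
          _ = ((T.filter (fun x => x i = t)).card : ℝ)
                * ((1+(n:ℝ))/(1+((t.natAbs:ℕ):ℝ)^d)) := by
              rw [Finset.sum_const, nsmul_eq_mul]
          _ ≤ (((2*t.natAbs+1)^(d-2) : ℕ) : ℝ)
                * ((1+(n:ℝ))/(1+((t.natAbs:ℕ):ℝ)^d)) := by
              refine mul_le_mul_of_nonneg_right ?_ (by positivity)
              exact_mod_cast (Finset.card_le_card hsub2).trans_eq (card_box2 e i hie n t)
          _ ≤ (4:ℝ)^d * (1+(n:ℝ)) * (1/(1+(t.natAbs:ℝ))^2) :=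
              numericB (by omega) t.natAbs (1+(n:ℝ)) (by positivity)
      calc ∑ t ∈ T.image (fun y => y i), ∑ x ∈ T.filter (fun x => x i = t),
              (1+(n:ℝ))/(1+((NN x : ℕ):ℝ)^d)
          ≤ ∑ t ∈ T.image (fun y => y i),
              (4:ℝ)^d * (1+(n:ℝ)) * (1/(1+(t.natAbs:ℝ))^2) := Finset.sum_le_sum hinner
        _ = (4:ℝ)^d * (1+(n:ℝ))
              * ∑ t ∈ T.image (fun y => y i), (1:ℝ)/(1+(t.natAbs:ℝ))^2 := by
            rw [Finset.mul_sum]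
        _ ≤ (4:ℝ)^d * (1+(n:ℝ)) * (4/(1+(n:ℝ))) := by
            refine mul_le_mul_of_nonneg_left (sum_over_int n _ himg) (by positivity)
        _ = 4^(d+1) := by
            rw [pow_succ]
            field_simp
  calc ∑ i : Fin d, ∑ x ∈ s'.filter (fun x => J x = i), (1+(n:ℝ))/(1+((NN x : ℕ):ℝ)^d)
      ≤ ∑ _i : Fin d, (4:ℝ)^(d+1) := Finset.sum_le_sum (fun i _ => hfib i)
    _ = (d:ℝ) * 4^(d+1) := by
        rw [Finset.sum_const, Finset.card_univ, Fintype.card_fin, nsmul_eq_mul]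

end Stmt12

/-- For `d ≥ 3` there is `C(d)` such that for every integer `n ≥ 0`,
`Σ_{x ∈ ℤ^d, x₁ = n} (1 + min(n, |x|)) / (1 + |x|^d) ≤ C(d)`,
where `|·|` is the ℓ^∞ norm. -/
theorem stmt_12 (d : ℕ) (hd : 3 ≤ d) :
    ∃ C : ℝ, ∀ n : ℕ,
      (∑' x : Fin d → ℤ, if x ⟨0, by omega⟩ = (n : ℤ) then
          (1 + min ((n : ℝ)) ‖x‖) / (1 + ‖x‖ ^ d) else 0) ≤ C := by
  refine ⟨(d:ℝ) * 4^(d+1), fun n => ?_⟩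
  refine tsum_le_of_sum_le' (by positivity) (fun u => ?_)
  exact Stmt12.key hd ⟨0, by omega⟩ n u
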